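/- Let p be an odd prime, k an integer, α an integer not divisible by p, and let χ and ψ be Dirichlet characters mod p. Suppose G : ℍ → ℂ satisfies G(Mτ) = χ(d)·χ_p(d)·(cτ+d)^k·G(τ) for every M = (a b; c d) ∈ Γ₀(p²) and every τ ∈ ℍ. Define the component-wise twist G_ψ(τ) := (1/(2p)) · ∑_{γ=1}^{p-1} ψ(γ) · ∑_{j=0}^{p-1} e(jαγ²/p) · G(τ + j/p). Then G_ψ(Mτ) = ψ(d)·χ(d)·χ_p(d)·(cτ+d)^k·G_ψ(τ) for every M = (a b; c d) ∈ Γ₀(p²) and every τ ∈ ℍ. -/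

import Mathlib

open Complex Finset

/-- `e(x) = exp(2πix)`. -/
noncomputable def e (x : ℂ) : ℂ := Complex.exp (2 * (Real.pi : ℂ) * Complex.I * x)

/-- The component-wise twist `G_ψ` of a scalar-valued modular form `G`,
`G_ψ(τ) = (1/(2p)) ∑_{γ=1}^{p-1} ψ(γ) ∑_{j=0}^{p-1} e(jαγ²/p) G(τ + j/p)`. -/
noncomputable def componentTwist (p : ℕ) (α : ℤ) (ψ : DirichletCharacter ℂ p)
    (G : ℂ → ℂ) : ℂ → ℂ := fun τ =>
  (1 / (2 * p)) * ∑ γ ∈ Finset.Icc 1 (p - 1), ψ (γ : ZMod p) *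
    ∑ j ∈ Finset.range p, e ((j : ℂ) * (α : ℂ) * (γ : ℂ) ^ 2 / p) * G (τ + (j : ℂ) / p)

lemma e_add_int (x : ℂ) (n : ℤ) : e (x + n) = e x := by
  unfold e
  rw [mul_add, Complex.exp_add]
  rw [show 2 * (Real.pi:ℂ) * Complex.I * n = (n:ℂ) * (2 * Real.pi * Complex.I) by ring]
  rw [Complex.exp_int_mul_two_pi_mul_I n, mul_one]

lemma e_mod (p : ℕ) (hp : p ≠ 0) (α : ℤ) (m n : ℕ) (h : (m : ZMod p) = (n : ZMod p)) :
    e ((α:ℂ) * m / p) = e ((α:ℂ) * n / p) := by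
  have h' : ((m:ℤ) : ZMod p) = ((n:ℤ) : ZMod p) := by push_cast; exact_mod_cast h
  obtain ⟨t, ht⟩ := (ZMod.intCast_eq_intCast_iff _ _ _).mp h' |>.dvd
  have htc : (n:ℂ) - (m:ℂ) = (p:ℂ) * t := by exact_mod_cast ht
  have hpC : (p:ℂ) ≠ 0 := Nat.cast_ne_zero.mpr hp
  have key : (α:ℂ) * m / p = (α:ℂ) * n / p + ((-(α * t) : ℤ) : ℂ) := by
    field_simp
    push_cast
    linear_combination (-(α:ℂ)) * htc
  rw [key, e_add_int]

theorem twist_transformation (p : ℕ) [Fact p.Prime] (hp2 : p ≠ 2) (k : ℤ) (α : ℤ)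
    (hα : ¬ (p : ℤ) ∣ α) (χ ψ : DirichletCharacter ℂ p) (G : ℂ → ℂ)
    (hG : ∀ a b c d : ℤ, a * d - b * c = 1 → ((p : ℤ) ^ 2 ∣ c) →
      ∀ τ : ℂ, 0 < τ.im →
        G (((a : ℂ) * τ + b) / ((c : ℂ) * τ + d)) =
          χ (d : ZMod p) * (legendreSym p d : ℂ) * ((c : ℂ) * τ + d) ^ k * G τ) :
    ∀ a b c d : ℤ, a * d - b * c = 1 → ((p : ℤ) ^ 2 ∣ c) →
      ∀ τ : ℂ, 0 < τ.im →
        componentTwist p α ψ G (((a : ℂ) * τ + b) / ((c : ℂ) * τ + d)) =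
          ψ (d : ZMod p) * χ (d : ZMod p) * (legendreSym p d : ℂ) *
            ((c : ℂ) * τ + d) ^ k * componentTwist p α ψ G τ := by
  intro a b c d hdet hcdvd τ him
  obtain ⟨c₀, hc⟩ := hcdvd
  have hp0 : 0 < p := (Fact.out : p.Prime).pos
  have hnz : NeZero p := ⟨hp0.ne'⟩
  have hpC : (p:ℂ) ≠ 0 := Nat.cast_ne_zero.mpr hp0.ne'
  set D : ZMod p := ((d:ℤ) : ZMod p) with hD
  have hd0 : D ≠ 0 := by
    intro h
    have h1 : ((a * d - b * c : ℤ) : ZMod p) = 1 := by rw [hdet]; norm_num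
    rw [hc] at h1
    push_cast at h1
    rw [← hD, h] at h1
    simp at h1
  have hcd_ne : (c:ℂ) * τ + d ≠ 0 := by
    intro h
    have him0 : ((c:ℂ) * τ + d).im = 0 := by rw [h]; simp
    have hre : (c:ℝ) * τ.im = 0 := by
      simpa [Complex.add_im, Complex.mul_im] using him0
    rcases mul_eq_zero.mp hre with h1 | h1
    · have hcz : c = 0 := by exact_mod_cast h1
      rw [hcz] at h
      push_cast at h
      rw [zero_mul, zero_add] at h
      have hdz : d = 0 := by exact_mod_cast h
      rw [hcz, hdz] at hdet; simp at hdet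
    · exact him.ne' h1
  set σ : ℕ → ℕ := fun j => ((j : ZMod p) * D^2).val with hσdef
  set σ' : ℕ → ℕ := fun j => ((j : ZMod p) * (D⁻¹)^2).val with hσ'def
  set ρ : ℕ → ℕ := fun γ => ((γ : ZMod p) * D⁻¹).val with hρdef
  set ρ' : ℕ → ℕ := fun γ => ((γ : ZMod p) * D).val with hρ'def
  set A : Finset ℕ := Finset.Icc 1 (p - 1) with hA
  set B : Finset ℕ := Finset.range p with hB
  set C : ℂ := (χ ((d:ℤ) : ZMod p) : ℂ) * (legendreSym p d : ℂ) * ((c:ℂ)*τ + d)^k with hCdef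
  -- the key matrix computation
  have key : ∀ j : ℕ, j < p →
      G (((a:ℂ)*τ + b)/((c:ℂ)*τ + d) + (j:ℂ)/p) = C * G (τ + ((σ j : ℕ) : ℂ)/p) := by
    intro j hjlt
    set j' : ℕ := σ j with hj'
    have hj'cast : ((j' : ℤ) : ZMod p) = ((j : ℤ) : ZMod p) * D^2 := by
      push_cast
      simp [hj', hσdef, ZMod.natCast_val, ZMod.cast_id]
    have hmod : ((j * d * d : ℤ) : ZMod p) = ((j' : ℤ) : ZMod p) := by
      rw [hj'cast, hD]; push_cast; ring
    obtain ⟨m, hm⟩ := ((ZMod.intCast_eq_intCast_iff _ _ _).mp hmod).dvd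
    set a' : ℤ := a + j * p * c₀ with ha'
    set d' : ℤ := d - p * c₀ * j' with hd'
    set b' : ℤ := b - j * d * (p * b * c₀ + (j:ℤ) * c₀ * d) - a' * m with hb'def
    have hb' : (p:ℤ) * b' = p * b + j * d - a' * j' := by
      rw [hb'def, ha']
      linear_combination (a + (j:ℤ)*p*c₀) * hm + (j:ℤ)*d*hdet + (j:ℤ)*d*b*hc
    have hdet2 : a * d - b * ((p:ℤ)^2*c₀) = 1 := by linear_combination hdet + b*hc
    have hdet' : a' * d' - b' * ((p:ℤ)^2*c₀) = 1 := by
      rw [ha', hb'def, hd']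
      linear_combination (1 - (j:ℤ)*p*c₀*d) * hdet2 - ((a:ℤ)*p*c₀ + (j:ℤ)*(p:ℤ)^2*c₀^2) * hm
    have hden : ((((p:ℤ)^2*c₀ : ℤ):ℂ)) * (τ + (j':ℂ)/p) + (d':ℂ) = (c:ℂ)*τ + (d:ℂ) := by
      rw [hd', hc]
      push_cast
      field_simp
      ring
    have him' : 0 < (τ + (j':ℂ)/p).im := by
      have : ((j':ℂ)/p).im = 0 := by
        rw [show (j':ℂ)/(p:ℂ) = (((j':ℝ)/(p:ℝ) : ℝ) : ℂ) by push_cast; ring]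
        exact Complex.ofReal_im _
      rw [Complex.add_im, this, add_zero]; exact him
    have hcC : (c:ℂ) = (p:ℂ)^2 * (c₀:ℂ) := by exact_mod_cast congrArg (Int.cast : ℤ → ℂ) hc
    have hb'C : (p:ℂ) * (b':ℂ) = p * b + j * d - (a':ℂ) * j' := by exact_mod_cast hb'
    have hnum : ((a':ℤ):ℂ) * (τ + (j':ℂ)/p) + ((b':ℤ):ℂ)
        = ((a:ℂ) + (j:ℂ)*(c:ℂ)/p)*τ + ((b:ℂ) + (j:ℂ)*(d:ℂ)/p) := by
      have ha'C : (a':ℂ) = (a:ℂ) + (j:ℂ)*(p:ℂ)*(c₀:ℂ) := by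
        exact_mod_cast congrArg (Int.cast : ℤ → ℂ) ha'
      field_simp
      linear_combination hb'C - (j:ℂ)*τ*hcC + (p:ℂ)*τ*ha'C
    have harg : ((a:ℂ)*τ + b)/((c:ℂ)*τ + d) + (j:ℂ)/p
        = ((a':ℂ) * (τ + (j':ℂ)/p) + (b':ℂ)) / ((((p:ℤ)^2*c₀ : ℤ):ℂ) * (τ + (j':ℂ)/p) + (d':ℂ)) := by
      rw [hden, hnum]
      rw [eq_div_iff hcd_ne, add_mul, div_mul_cancel₀ _ hcd_ne]
      ring
    have hGj := hG a' b' ((p:ℤ)^2*c₀) d' hdet' ⟨c₀, rfl⟩ (τ + (j':ℂ)/p) him'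
    have hdd : ((d':ℤ) : ZMod p) = ((d:ℤ) : ZMod p) := by
      rw [hd']; push_cast; simp
    have hleg : legendreSym p d' = legendreSym p d := by
      unfold legendreSym
      rw [hdd]
    rw [harg, hGj, hden, hdd, hleg, hCdef]
  -- facts about the reindexing maps
  have hmemB : ∀ j, σ j ∈ B := fun j => Finset.mem_range.mpr (ZMod.val_lt _)
  have hmemB' : ∀ j, σ' j ∈ B := fun j => Finset.mem_range.mpr (ZMod.val_lt _)
  have hAne : ∀ γ ∈ A, (γ : ZMod p) ≠ 0 := by
    intro γ hγ h0
    rw [hA, Finset.mem_Icc] at hγ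
    have : p ∣ γ := (ZMod.natCast_eq_zero_iff γ p).mp h0
    have := Nat.le_of_dvd (by omega) this
    omega
  have hmemA : ∀ γ ∈ A, ρ γ ∈ A := by
    intro γ hγ
    rw [hA, Finset.mem_Icc]
    constructor
    · rw [Nat.one_le_iff_ne_zero]
      intro h0
      exact mul_ne_zero (hAne γ hγ) (inv_ne_zero hd0) ((ZMod.val_eq_zero _).mp h0)
    · exact Nat.le_sub_one_of_lt (ZMod.val_lt _)
  have hmemA' : ∀ γ ∈ A, ρ' γ ∈ A := by
    intro γ hγ
    rw [hA, Finset.mem_Icc]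
    constructor
    · rw [Nat.one_le_iff_ne_zero]
      intro h0
      exact mul_ne_zero (hAne γ hγ) hd0 ((ZMod.val_eq_zero _).mp h0)
    · exact Nat.le_sub_one_of_lt (ZMod.val_lt _)
  have castval : ∀ x : ZMod p, ((x.val : ℕ) : ZMod p) = x := by
    intro x; simp [ZMod.natCast_val, ZMod.cast_id]
  have hσσ' : ∀ j ∈ B, σ' (σ j) = j := by
    intro j hj
    rw [hσ'def, hσdef]
    simp only
    rw [castval]
    rw [show (j : ZMod p) * D^2 * (D⁻¹)^2 = (j : ZMod p) by field_simp]
    exact ZMod.val_cast_of_lt (Finset.mem_range.mp hj)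
  have hσ'σ : ∀ j ∈ B, σ (σ' j) = j := by
    intro j hj
    rw [hσ'def, hσdef]
    simp only
    rw [castval]
    rw [show (j : ZMod p) * (D⁻¹)^2 * D^2 = (j : ZMod p) by field_simp]
    exact ZMod.val_cast_of_lt (Finset.mem_range.mp hj)
  have hAlt : ∀ γ ∈ A, γ < p := by
    intro γ hγ; rw [hA, Finset.mem_Icc] at hγ; omega
  have hρρ' : ∀ γ ∈ A, ρ' (ρ γ) = γ := by
    intro γ hγ
    rw [hρdef, hρ'def]
    simp only
    rw [castval]
    rw [show (γ : ZMod p) * D⁻¹ * D = (γ : ZMod p) by field_simp]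
    exact ZMod.val_cast_of_lt (hAlt γ hγ)
  have hρ'ρ : ∀ γ ∈ A, ρ (ρ' γ) = γ := by
    intro γ hγ
    rw [hρdef, hρ'def]
    simp only
    rw [castval]
    rw [show (γ : ZMod p) * D * D⁻¹ = (γ : ZMod p) by field_simp]
    exact ZMod.val_cast_of_lt (hAlt γ hγ)
  -- e-invariance
  have he : ∀ γ ∈ A, ∀ j ∈ B,
      e ((j:ℂ) * (α:ℂ) * (γ:ℂ)^2 / p) = e (((σ j : ℕ):ℂ) * (α:ℂ) * (((ρ γ : ℕ)):ℂ)^2 / p) := by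
    intro γ hγ j hj
    rw [show (j:ℂ) * (α:ℂ) * (γ:ℂ)^2 / p = (α:ℂ) * ((j * γ^2 : ℕ) : ℂ) / p by push_cast; ring]
    rw [show ((σ j : ℕ):ℂ) * (α:ℂ) * (((ρ γ : ℕ)):ℂ)^2 / p
        = (α:ℂ) * ((σ j * (ρ γ)^2 : ℕ) : ℂ) / p by push_cast; ring]
    apply e_mod p hp0.ne'
    push_cast
    rw [hσdef, hρdef]
    simp only
    rw [castval, castval]
    field_simp
  -- character relation
  have hψ : ∀ γ ∈ A, ψ (γ : ZMod p) = ψ ((d:ℤ) : ZMod p) * ψ (((ρ γ : ℕ)) : ZMod p) := by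
    intro γ hγ
    rw [hρdef]
    simp only
    rw [castval, ← hD, ← map_mul]
    congr 1
    field_simp
  -- inner sum reindex
  have inner : ∀ γ ∈ A,
      (∑ j ∈ B, e ((j:ℂ) * (α:ℂ) * (γ:ℂ)^2 / p) * G (((a:ℂ)*τ + b)/((c:ℂ)*τ + d) + (j:ℂ)/p))
      = C * ∑ j ∈ B, e ((j:ℂ) * (α:ℂ) * (((ρ γ : ℕ)):ℂ)^2 / p) * G (τ + (j:ℂ)/p) := by
    intro γ hγ
    rw [Finset.mul_sum]
    refine Finset.sum_nbij' σ σ' (fun j _ => hmemB j) (fun j _ => hmemB' j) hσσ' hσ'σ ?_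
    intro j hj
    rw [key j (Finset.mem_range.mp hj), he γ hγ j hj]
    ring
  -- outer sum reindex
  have outer :
      (∑ γ ∈ A, ψ (γ : ZMod p) *
        ∑ j ∈ B, e ((j:ℂ) * (α:ℂ) * (γ:ℂ)^2 / p) * G (((a:ℂ)*τ + b)/((c:ℂ)*τ + d) + (j:ℂ)/p))
      = ∑ γ ∈ A, (ψ ((d:ℤ) : ZMod p) * C) * (ψ (γ : ZMod p) *
          ∑ j ∈ B, e ((j:ℂ) * (α:ℂ) * (γ:ℂ)^2 / p) * G (τ + (j:ℂ)/p)) := by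
    refine Finset.sum_nbij' ρ ρ' hmemA hmemA' hρρ' hρ'ρ ?_
    intro γ hγ
    rw [inner γ hγ, hψ γ hγ]
    ring
  -- conclude
  rw [componentTwist, componentTwist]
  rw [outer, ← Finset.mul_sum]
  rw [hCdef]
  ring
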